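/- Let $\pi : X \to S$ be an unramified separated morphism of noetherian schemes. Then $\pi$ has at most finitely many sections $\zeta : S \to X$. -/

import Mathlib

open AlgebraicGeometry CategoryTheory TopologicalSpace

universe u

namespace PaperFF

/-- A morphism of schemes is unramified if it is locally of finite type and all of its
stalk maps are formally unramified. -/
def IsUnramifiedMor {X Y : Scheme.{u}} (f : X ⟶ Y) : Prop :=
  LocallyOfFiniteType f ∧ ∀ x : X,
    letI : Algebra (Y.presheaf.stalk (f.base x)) (X.presheaf.stalk x) :=
      RingHom.toAlgebra (f.stalkMap x).hom
    Algebra.FormallyUnramified (Y.presheaf.stalk (f.base x)) (X.presheaf.stalk x)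



lemma ker_eq_bot_of_formallyUnramified {R A : Type u} [CommRing R] [Nontrivial R]
    [CommRing A] [IsLocalRing A] [IsNoetherianRing A] [Algebra R A]
    [Algebra.FormallyUnramified R A] (p : A →+* R)
    (hp : ∀ r, p (algebraMap R A r) = r) : RingHom.ker p = ⊥ := by
  set I : Ideal A := RingHom.ker p with hI
  have hIle : I ≤ I ^ 2 := by
    let f₁ : A →ₐ[R] A ⧸ I ^ 2 := Ideal.Quotient.mkₐ R (I ^ 2)
    let f₂ : A →ₐ[R] A ⧸ I ^ 2 :=
      { toRingHom := ((Ideal.Quotient.mk (I ^ 2)).comp (algebraMap R A)).comp p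
        commutes' := fun r => by simp [hp] }
    have hJ : (I.map (Ideal.Quotient.mk (I ^ 2))) ^ 2 = ⊥ := by
      rw [← Ideal.map_pow, Ideal.map_quotient_self]
    have key := Algebra.FormallyUnramified.comp_injective (R := R) (A := A)
      (I.map (Ideal.Quotient.mk (I ^ 2))) hJ
    have heq : (Ideal.Quotient.mkₐ R (I.map (Ideal.Quotient.mk (I ^ 2)))).comp f₁ = (Ideal.Quotient.mkₐ R (I.map (Ideal.Quotient.mk (I ^ 2)))).comp f₂ := by
      ext a
      show Ideal.Quotient.mk _ (Ideal.Quotient.mk (I ^ 2) a)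
        = Ideal.Quotient.mk _ (Ideal.Quotient.mk (I ^ 2) (algebraMap R A (p a)))
      rw [Ideal.Quotient.eq]
      rw [← map_sub]
      refine Ideal.mem_map_of_mem _ ?_
      simp only [hI, RingHom.mem_ker, map_sub, hp, sub_self]
    have hf : f₁ = f₂ := key heq
    intro a ha
    have := congrArg (fun f : A →ₐ[R] A ⧸ I ^ 2 => f a) hf
    simp only [f₁, f₂, Ideal.Quotient.mkₐ_eq_mk, AlgHom.coe_mk, RingHom.coe_comp,
      Function.comp_apply] at this
    rw [RingHom.mem_ker.mp ha, map_zero, map_zero] at this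
    exact Ideal.Quotient.eq_zero_iff_mem.mp this
  have hItop : I ≠ ⊤ := by
    intro h
    have h1 : (1 : A) ∈ I := h ▸ Submodule.mem_top
    have : p 1 = 0 := RingHom.mem_ker.mp h1
    simp at this
  have hm : I ≤ IsLocalRing.maximalIdeal A := IsLocalRing.le_maximalIdeal hItop
  refine Submodule.eq_bot_of_le_smul_of_le_jacobson_bot (IsLocalRing.maximalIdeal A) I
    (IsNoetherian.noetherian I) ?_ ?_
  · refine hIle.trans ?_
    rw [pow_two, Ideal.smul_eq_mul]
    exact Ideal.mul_mono_left hm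
  · rw [IsLocalRing.jacobson_eq_maximalIdeal ⊥ bot_ne_top]


section Top
open Set
variable {α : Type u} [TopologicalSpace α]

lemma aux_decomp [QuasiSober α] {U : Set α} (hU : IsOpen U)
    (hsp : StableUnderSpecialization U) :
    ∀ n (S : Set (Set α)), S.Finite → S.ncard ≤ n →
      (∀ t ∈ S, IsClosed t) → (∀ t ∈ S, IsIrreducible t) → closure U = ⋃₀ S →
      closure U ⊆ U := by
  intro n
  induction n with
  | zero =>
    intro S hfin hcard _ _ hdec
    have : S = ∅ := Set.ncard_eq_zero hfin |>.mp (Nat.le_zero.mp hcard)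
    rw [hdec, this]
    simp
  | succ n ih =>
    intro S hfin hcard hcl hirr hdec
    by_cases hS : ∃ t ∈ S, t ⊆ ⋃₀ (S \ {t})
    · obtain ⟨t, htS, ht⟩ := hS
      refine ih (S \ {t}) (hfin.diff) ?_ (fun u hu => hcl u hu.1)
        (fun u hu => hirr u hu.1) ?_
      · have := Set.ncard_diff_singleton_lt_of_mem htS hfin
        omega
      · apply subset_antisymm
        · rw [hdec]
          intro x hx
          obtain ⟨u, huS, hxu⟩ := hx
          by_cases hut : u = t
          · exact ht (hut ▸ hxu)
          · exact ⟨u, ⟨huS, hut⟩, hxu⟩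
        · refine Set.sUnion_subset fun u hu => ?_
          rw [hdec]
          exact Set.subset_sUnion_of_mem hu.1
    · push_neg at hS
      rw [hdec]
      refine Set.sUnion_subset fun t htS => ?_
      have hne := hS t htS
      obtain ⟨x, hxt, hxrest⟩ := Set.not_subset.mp hne
      have hVopen : IsOpen (⋃₀ (S \ {t}))ᶜ := by
        have : IsClosed (⋃₀ (S \ {t})) := by
          rw [Set.sUnion_eq_biUnion]
          exact Set.Finite.isClosed_biUnion (hfin.diff) fun u hu => hcl u hu.1
        exact this.isOpen_compl
      -- x ∈ closure U, so the open set V ∩ ... meets U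
      have hxcl : x ∈ closure U := by rw [hdec]; exact ⟨t, htS, hxt⟩
      obtain ⟨u0, hu0⟩ := mem_closure_iff.mp hxcl _ hVopen hxrest
      have hu0U : u0 ∈ U := hu0.2
      have hu0t : u0 ∈ t := by
        have : u0 ∈ closure U := subset_closure hu0.2
        rw [hdec] at this
        obtain ⟨w, hwS, hw⟩ := this
        by_cases hwt : w = t
        · exact hwt ▸ hw
        · exact absurd ⟨w, ⟨hwS, hwt⟩, hw⟩ hu0.1
      -- generic point of t
      have hgen := (hirr t htS).isGenericPoint_genericPoint (hcl t htS)
      set ξ := (hirr t htS).genericPoint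
      -- ξ ∈ U: U ∩ (rest)ᶜ is an open set meeting t = closure {ξ}
      have hξU : ξ ∈ U := by
        have hmem := hgen.mem_open_set_iff (hU.inter hVopen)
        have : (t ∩ (U ∩ (⋃₀ (S \ {t}))ᶜ)).Nonempty := ⟨u0, hu0t, hu0.2, hu0.1⟩
        exact ((hmem.mpr this) : ξ ∈ U ∩ _).1
      intro y hyt
      exact hsp (hgen.specializes hyt) hξU

lemma isClosed_of_isOpen_stableUnderSpecialization [NoetherianSpace α] [QuasiSober α]
    {U : Set α} (hU : IsOpen U) (hsp : StableUnderSpecialization U) : IsClosed U := by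
  obtain ⟨S, hfin, hcl, hirr, hdec⟩ :=
    NoetherianSpace.exists_finite_set_isClosed_irreducible (isClosed_closure (s := U))
  have h := aux_decomp hU hsp S.ncard S hfin le_rfl hcl hirr hdec
  have : closure U = U := subset_antisymm h subset_closure
  rw [← this]
  exact isClosed_closure

lemma isOpen_of_isClosed_stableUnderGenerization [NoetherianSpace α] [QuasiSober α]
    {Z : Set α} (hZ : IsClosed Z)
    (hg : ∀ ⦃a b : α⦄, a ⤳ b → b ∈ Z → a ∈ Z) : IsOpen Z := by
  have : IsClosed Zᶜ := by
    refine isClosed_of_isOpen_stableUnderSpecialization hZ.isOpen_compl ?_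
    intro a b hab ha hb
    exact ha (hg hab hb)
  simpa using this.isOpen_compl

lemma finite_connectedComponents [NoetherianSpace α] : Finite (ConnectedComponents α) := by
  have hfin : (irreducibleComponents α).Finite := NoetherianSpace.finite_irreducibleComponents
  haveI := hfin.to_subtype
  refine Finite.of_surjective
    (fun t : irreducibleComponents α => (ConnectedComponents.mk (t.2.1.1.choose))) ?_
  intro c
  obtain ⟨x, rfl⟩ := ConnectedComponents.surjective_coe c
  refine ⟨⟨irreducibleComponent x, irreducibleComponent_mem_irreducibleComponents x⟩, ?_⟩
  have h := (irreducibleComponent_mem_irreducibleComponents x).1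
  rw [ConnectedComponents.coe_eq_coe]
  have hpre : IsPreconnected (irreducibleComponent x) := h.2.isPreconnected
  have hx : x ∈ irreducibleComponent x := mem_irreducibleComponent
  have hc : h.1.choose ∈ irreducibleComponent x := h.1.choose_spec
  have h1 := hpre.subset_connectedComponent hx
  exact (connectedComponent_eq (h1 hc)).symm

lemma clopen_preimage_image {U : Set α} (hU : IsClopen U) :
    ConnectedComponents.mk ⁻¹' (ConnectedComponents.mk '' U) = U := by
  apply subset_antisymm
  · rintro x ⟨u, huU, hu⟩
    rw [ConnectedComponents.coe_eq_coe] at hu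
    have : x ∈ connectedComponent u := by
      rw [hu]; exact mem_connectedComponent
    exact hU.connectedComponent_subset huU this
  · exact Set.subset_preimage_image _ _

end Top


lemma stalk_noetherian {X : Scheme.{u}} [IsLocallyNoetherian X] (x : X) :
    IsNoetherianRing (X.presheaf.stalk x) := by
  have hU := isAffineOpen_opensRange (X.affineOpenCover.f (X.affineOpenCover.idx x))
  have hx : x ∈ (X.affineOpenCover.f (X.affineOpenCover.idx x)).opensRange := X.affineOpenCover.covers x
  letI := X.presheaf.algebra_section_stalk
    (⟨x, hx⟩ : ((X.affineOpenCover.f (X.affineOpenCover.idx x)).opensRange : Opens X))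
  haveI hloc := hU.isLocalization_stalk ⟨x, hx⟩
  haveI : IsNoetherianRing Γ(X, (X.affineOpenCover.f (X.affineOpenCover.idx x)).opensRange) :=
    IsLocallyNoetherian.component_noetherian ⟨_, hU⟩
  exact IsLocalization.isNoetherianRing (hU.primeIdealOf ⟨x, hx⟩).asIdeal.primeCompl
    (X.presheaf.stalk x) ‹_›

section

variable {X S : Scheme.{u}} (π : X ⟶ S)

lemma section_stalkMap_isIso [IsNoetherian X] [IsSeparated π] (hur : IsUnramifiedMor π)
    (ζ : S ⟶ X) (hζ : ζ ≫ π = 𝟙 S) (s : S) : IsIso (ζ.stalkMap s) := by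
  haveI : IsClosedImmersion (ζ ≫ π) := by rw [hζ]; infer_instance
  haveI hci : IsClosedImmersion ζ := IsClosedImmersion.of_comp ζ π
  haveI : IsIso ((ζ ≫ π).stalkMap s) := by rw [hζ]; infer_instance
  have hcomp : (ζ ≫ π).stalkMap s = π.stalkMap (ζ.base s) ≫ ζ.stalkMap s :=
    Scheme.Hom.stalkMap_comp ζ π s
  set c : S.presheaf.stalk (π.base (ζ.base s)) ⟶ S.presheaf.stalk s :=
    (ζ ≫ π).stalkMap s with hc
  haveI : IsIso c := ‹_›
  letI : Algebra (S.presheaf.stalk (π.base (ζ.base s))) (X.presheaf.stalk (ζ.base s)) :=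
    RingHom.toAlgebra (π.stalkMap (ζ.base s)).hom
  haveI := hur.2 (ζ.base s)
  haveI : IsNoetherianRing (X.presheaf.stalk (ζ.base s)) := stalk_noetherian _
  set p : X.presheaf.stalk (ζ.base s) ⟶ S.presheaf.stalk (π.base (ζ.base s)) :=
    ζ.stalkMap s ≫ inv c with hp
  have hpr : ∀ r, p (algebraMap (S.presheaf.stalk (π.base (ζ.base s)))
      (X.presheaf.stalk (ζ.base s)) r) = r := by
    intro r
    show (π.stalkMap (ζ.base s) ≫ p) r = r
    rw [hp, ← Category.assoc, ← hcomp, IsIso.hom_inv_id]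
    simp
  have hker : RingHom.ker p.hom = ⊥ :=
    ker_eq_bot_of_formallyUnramified _ hpr
  have hpinj : Function.Injective p := by
    rwa [← RingHom.injective_iff_ker_eq_bot] at hker
  have hτ : ζ.stalkMap s = p ≫ c := by rw [hp, Category.assoc, IsIso.inv_hom_id, Category.comp_id]
  have hcinj : Function.Injective c := fun a b h => by
    have h2 : (c ≫ inv c) a = (c ≫ inv c) b := by show inv c (c a) = inv c (c b); rw [h]
    rwa [IsIso.hom_inv_id] at h2
  have hinj : Function.Injective (ζ.stalkMap s) := by
    intro a b hab
    apply hpinj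
    apply hcinj
    show (p ≫ c) a = (p ≫ c) b
    rw [← hτ]
    exact hab
  have hsurj : Function.Surjective (ζ.stalkMap s) := ζ.stalkMap_surjective s
  exact (ConcreteCategory.isIso_iff_bijective _).mpr ⟨hinj, hsurj⟩


lemma section_isOpenImmersion [IsNoetherian X] [IsNoetherian S] [IsSeparated π]
    (hur : IsUnramifiedMor π) (ζ : S ⟶ X) (hζ : ζ ≫ π = 𝟙 S) :
    IsOpenImmersion ζ ∧ IsClopen (Set.range ζ.base) := by
  haveI : IsClosedImmersion (ζ ≫ π) := by rw [hζ]; infer_instance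
  haveI hci : IsClosedImmersion ζ := IsClosedImmersion.of_comp ζ π
  have hclosed : IsClosed (Set.range ζ.base) := hci.base_closed.isClosed_range
  have hiso := section_stalkMap_isIso π hur ζ hζ
  have hgen : ∀ ⦃a b : X⦄, a ⤳ b → b ∈ Set.range ζ.base → a ∈ Set.range ζ.base := by
    rintro a b hab ⟨s, rfl⟩
    have ha : a ∈ Set.range (X.fromSpecStalk (ζ.base s)).base := by
      rw [Scheme.range_fromSpecStalk]; exact hab
    obtain ⟨q, hq⟩ := ha
    haveI := hiso s
    set g := Spec.map (ζ.stalkMap s) with hg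
    haveI : IsIso g := inferInstance
    have hq' : g.base ((inv g).base q) = q := by
      rw [← Scheme.Hom.comp_apply, IsIso.inv_hom_id]
      simp
    have hcomm : g ≫ X.fromSpecStalk (ζ.base s) = S.fromSpecStalk s ≫ ζ := by
      rw [hg]; exact Scheme.SpecMap_stalkMap_fromSpecStalk ζ
    refine ⟨(S.fromSpecStalk s).base ((inv g).base q), ?_⟩
    calc ζ.base ((S.fromSpecStalk s).base ((inv g).base q))
        = (S.fromSpecStalk s ≫ ζ).base ((inv g).base q) := by
          rw [Scheme.Hom.comp_apply]
      _ = (g ≫ X.fromSpecStalk (ζ.base s)).base ((inv g).base q) := by rw [hcomm]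
      _ = (X.fromSpecStalk (ζ.base s)).base (g.base ((inv g).base q)) := by
          rw [Scheme.Hom.comp_apply]
      _ = a := by rw [hq', hq]
  have hopen : IsOpen (Set.range ζ.base) :=
    isOpen_of_isClosed_stableUnderGenerization hclosed hgen
  have hemb : Topology.IsOpenEmbedding ζ.base := ⟨hci.base_closed.toIsEmbedding, hopen⟩
  exact ⟨isOpenImmersion_iff_stalk.mpr ⟨hemb, hiso⟩, hclosed, hopen⟩

end

/-- an unramified separated morphism of noetherian schemes has at most
finitely many sections. -/
theorem finite_sections_of_unramified {X S : Scheme.{u}}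
    [IsNoetherian X] [IsNoetherian S] (π : X ⟶ S) (hur : IsUnramifiedMor π)
    [IsSeparated π] : Finite {ζ : S ⟶ X // ζ ≫ π = 𝟙 S} := by
  haveI : Finite (_root_.ConnectedComponents X) := finite_connectedComponents
  apply Finite.of_injective (fun ζ : {ζ : S ⟶ X // ζ ≫ π = 𝟙 S} =>
    (ConnectedComponents.mk '' Set.range ζ.1.base : Set (_root_.ConnectedComponents X)))
  intro ζ ζ' h
  obtain ⟨hoi, hclop⟩ := section_isOpenImmersion π hur ζ.1 ζ.2
  obtain ⟨hoi', hclop'⟩ := section_isOpenImmersion π hur ζ'.1 ζ'.2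
  have himg : ConnectedComponents.mk '' Set.range ζ.1.base
      = ConnectedComponents.mk '' Set.range ζ'.1.base := h
  have hr : Set.range ζ'.1.base ⊆ Set.range ζ.1.base := by
    have heq : Set.range ζ.1.base = Set.range ζ'.1.base := by
      rw [← clopen_preimage_image hclop, ← clopen_preimage_image hclop', himg]
    rw [heq]
  haveI := hoi
  have hlift : IsOpenImmersion.lift ζ.1 ζ'.1 hr ≫ ζ.1 = ζ'.1 :=
    IsOpenImmersion.lift_fac ζ.1 ζ'.1 hr
  have h1 : IsOpenImmersion.lift ζ.1 ζ'.1 hr = 𝟙 S := by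
    have h2 := congrArg (fun t => t ≫ π) hlift
    simpa only [Category.assoc, ζ.2, ζ'.2, Category.comp_id] using h2
  apply Subtype.ext
  rw [← hlift, h1, Category.id_comp]

end PaperFF
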